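/- In a depth-2 causal model with independent input variables (i.e., a classifier f on a feature space with all contexts allowed), a set Y is a contrastive explanation for instance (v, c) if and only if the conjunction of assignments (Y = v|Y) is an actual cause of the output being c under the modified Halpern–Pearl definition with empty witness set W. -/
import Mathlib

lemma aux_exists {F : Type*} [DecidableEq F] {D : F → Type*} {K : Type*}
    (f : (∀ i, D i) → K) (v : ∀ i, D i) (c : K) (S : Finset F) :
    (∃ x : ∀ i, D i, (∀ i ∉ S, x i = v i) ∧ f x ≠ c) ↔
    (∃ y' : ∀ i, D i, f (fun i => if i ∈ S then y' i else v i) ≠ c) := by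
  constructor
  · rintro ⟨x, hx, hfx⟩
    refine ⟨x, ?_⟩
    have : (fun i => if i ∈ S then x i else v i) = x := by
      funext i; by_cases h : i ∈ S <;> simp [h, hx i]
    rwa [this]
  · rintro ⟨y', hy⟩
    exact ⟨_, fun i hi => by simp [hi], hy⟩

/-- Y is a contrastive explanation iff (Y = v|Y) is an actual cause
(modified HP definition with empty witness set) of the output being c. -/
theorem stmt_2 {F : Type*} [Fintype F] [DecidableEq F] {D : F → Type*}
    [∀ i, Nonempty (D i)] {K : Type*}
    (f : (∀ i, D i) → K) (v : ∀ i, D i) (c : K) (hv : f v = c) (Y : Finset F) :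
    -- contrastive explanation: subset-minimal contrastive set
    ((∃ x : ∀ i, D i, (∀ i ∉ Y, x i = v i) ∧ f x ≠ c) ∧
      ∀ Y' : Finset F, Y' ⊂ Y →
        ¬ (∃ x : ∀ i, D i, (∀ i ∉ Y', x i = v i) ∧ f x ≠ c))
    ↔
    -- actual cause with W = ∅:
    -- AC1: the features in Y take the values v|Y and f v = c (the value part is
    -- automatic as Y is assigned v|Y); AC2: some resetting of Y changes the output;
    -- AC3: no proper subset of Y satisfies AC2.
    (f v = c ∧
      (∃ y' : ∀ i, D i, f (fun i => if i ∈ Y then y' i else v i) ≠ c) ∧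
      ∀ Y' : Finset F, Y' ⊂ Y →
        ¬ (∃ y' : ∀ i, D i, f (fun i => if i ∈ Y' then y' i else v i) ≠ c)) := by
  simp only [← aux_exists f v c]
  tauto
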